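/- In the rooted-tree self-backhauling model with half-duplex base stations, every backhaul hop of rate R1 and access rates R_{a,u}, the max-min rate equals the reciprocal of the largest per-BS time coefficient: γ* = ( max_{i ∈ {0,…,N}} c_i )^{-1}, where c_i = Σ_{u : σ(u)=i} 1/R_{a,u} + (f(i) − w_i)/R1 + 𝟙{i ≠ 0} · f(i)/R1. In particular the supremum over all feasible scheduling matrices of the minimum end-to-end user rate is attained and equals this closed-form value. -/

import Mathlib

open Finset
open scoped Classical

/-- A half-duplex self-backhauled cellular network on a routing tree.
BSs are indexed by `Fin (N+1)` with `0` the fiber site (MBS); there are `U+1 ≥ 1` users.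
Every backhaul link `(p i, i)` has instantaneous rate `R1` and the access link of user
`u` has instantaneous rate `Ra u`. -/
structure HDNet (N U : ℕ) where
  /-- the parent map of the routing tree (the parent of the root is the root itself,
  encoding that the parent map is really only defined on `{1,…,N}`) -/
  p : Fin (N + 1) → Fin (N + 1)
  hp0 : p 0 = 0
  /-- every BS reaches the fiber site by iterating the parent map -/
  hroot : ∀ i : Fin (N + 1), ∃ m : ℕ, p^[m] i = 0
  /-- serving BS of each user -/
  σ : Fin (U + 1) → Fin (N + 1)
  /-- instantaneous rate of every backhaul link -/
  R1 : ℝ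
  hR1 : 0 < R1
  /-- instantaneous rate of the access link of each user -/
  Ra : Fin (U + 1) → ℝ
  hRa : ∀ u, 0 < Ra u

namespace HDNet

variable {N U : ℕ}

/-- Links: the access link of each user (`inl u`), or the backhaul link `(p i, i)` for
`i ≠ 0` (`inr i`; the summand `inr 0` is a dummy which is never a hop of any route). -/
abbrev Link (N U : ℕ) := Fin (U + 1) ⊕ Fin (N + 1)

/-- BS `i` lies on the tree path from the fiber site `0` to BS `j`. -/
def onPath (net : HDNet N U) (i j : Fin (N + 1)) : Prop :=
  ∃ m : ℕ, net.p^[m] j = i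

/-- `l` is a hop on the route of user `u` (the route of `u` is the tree path from `0`
to `σ u` followed by the access link of `u`). -/
def isHop (net : HDNet N U) (l : Link N U) (u : Fin (U + 1)) : Prop :=
  match l with
  | .inl u' => u' = u
  | .inr i => i ≠ 0 ∧ net.onPath i (net.σ u)

/-- link `l` is incident to BS `j`. -/
def incident (net : HDNet N U) (l : Link N U) (j : Fin (N + 1)) : Prop :=
  match l with
  | .inl u => net.σ u = j
  | .inr i => i ≠ 0 ∧ (j = i ∨ j = net.p i)

/-- instantaneous rate of link `l`. -/
noncomputable def rate (net : HDNet N U) : Link N U → ℝ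
  | .inl u => net.Ra u
  | .inr _ => net.R1

/-- A scheduling matrix `τ` is feasible if all entries lie in `[0,1]`, an entry vanishes
unless the link is a hop on the route of the user, and every (half-duplex) BS is active
for at most `1` unit of time in total. -/
def Feasible (net : HDNet N U) (τ : Link N U → Fin (U + 1) → ℝ) : Prop :=
  (∀ l u, 0 ≤ τ l u ∧ τ l u ≤ 1) ∧
  (∀ l u, ¬ net.isHop l u → τ l u = 0) ∧
  ∀ j : Fin (N + 1),
    ∑ l : Link N U, ∑ u : Fin (U + 1), (if net.incident l j then τ l u else 0) ≤ 1

/-- End-to-end rate of user `u`: the minimum of its long-term rates `r_l · τ l u` over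
all hops `l` of its route. -/
noncomputable def e2e (net : HDNet N U) (τ : Link N U → Fin (U + 1) → ℝ)
    (u : Fin (U + 1)) : ℝ :=
  (Finset.univ.filter fun l : Link N U => net.isHop l u).inf'
    ⟨Sum.inl u, Finset.mem_filter.mpr ⟨Finset.mem_univ _, rfl⟩⟩
    fun l => net.rate l * τ l u

/-- Effective load `f i`: number of users whose route passes through BS `i`. -/
noncomputable def f (net : HDNet N U) (i : Fin (N + 1)) : ℕ :=
  (Finset.univ.filter fun u : Fin (U + 1) => net.onPath i (net.σ u)).card

/-- Direct load `w i`: number of users served by BS `i`. -/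
noncomputable def w (net : HDNet N U) (i : Fin (N + 1)) : ℕ :=
  (Finset.univ.filter fun u : Fin (U + 1) => net.σ u = i).card

/-- Per-BS time coefficient
`c i = Σ_{u : σ u = i} 1/Ra u + (f i − w i)/R1 + 𝟙{i ≠ 0} · f i / R1`. -/
noncomputable def c (net : HDNet N U) (i : Fin (N + 1)) : ℝ :=
  (∑ u : Fin (U + 1), if net.σ u = i then (net.Ra u)⁻¹ else 0)
    + ((net.f i : ℝ) - (net.w i : ℝ)) / net.R1
    + (if i ≠ 0 then (net.f i : ℝ) / net.R1 else 0)

end HDNet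


namespace HDNet

variable {N U : ℕ} (net : HDNet N U)

lemma iter_zero (m : ℕ) : net.p^[m] 0 = 0 := Function.iterate_fixed net.hp0 m

lemma no_period {i : Fin (N + 1)} (hi : i ≠ 0) {m : ℕ} (hm : 0 < m)
    (h : net.p^[m] i = i) : False := by
  obtain ⟨k, hk⟩ := net.hroot i
  have hq : ∀ q : ℕ, net.p^[m * q] i = i := by
    intro q
    induction q with
    | zero => simp
    | succ q ih =>
      rw [Nat.mul_succ, Function.iterate_add_apply, h, ih]
  have h1 : net.p^[m * k] i = i := hq k
  have h2 : net.p^[m * k] i = 0 := by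
    have hge : k ≤ m * k := Nat.le_mul_of_pos_left k hm
    have hco : m * k = (m * k - k) + k := (Nat.sub_add_cancel hge).symm
    rw [hco, Function.iterate_add_apply, hk, net.iter_zero]
  exact hi (h1.symm.trans h2)

lemma onPath_self (s : Fin (N + 1)) : net.onPath s s := ⟨0, rfl⟩

lemma onPath_parent {i s : Fin (N + 1)} (h : net.onPath i s) :
    net.onPath (net.p i) s := by
  obtain ⟨m, hm⟩ := h
  exact ⟨m + 1, by rw [Function.iterate_succ_apply', hm]⟩

lemma exists_child {j s : Fin (N + 1)} (h : net.onPath j s) (hne : s ≠ j) :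
    ∃ i, i ≠ 0 ∧ net.onPath i s ∧ net.p i = j ∧ j ≠ i := by
  obtain ⟨m, hm⟩ := h
  have hP : ∃ m : ℕ, net.p^[m] s = j := ⟨m, hm⟩
  have hfind : net.p^[Nat.find hP] s = j := Nat.find_spec hP
  have hm0pos : 0 < Nat.find hP := by
    rcases Nat.eq_zero_or_pos (Nat.find hP) with h' | h'
    · exfalso; apply hne; rw [← hfind, h']; rfl
    · exact h'
  have hstep : net.p (net.p^[Nat.find hP - 1] s) = j := by
    have h' := Function.iterate_succ_apply' net.p (Nat.find hP - 1) s
    rw [← h', show (Nat.find hP - 1).succ = Nat.find hP by omega, hfind]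
  have hlt : ¬ net.p^[Nat.find hP - 1] s = j :=
    Nat.find_min hP (Nat.pred_lt (Nat.pos_iff_ne_zero.mp hm0pos))
  refine ⟨net.p^[Nat.find hP - 1] s, ?_, ⟨_, rfl⟩, hstep, fun hji => hlt hji.symm⟩
  intro h0
  apply hlt
  rw [h0] at hstep ⊢
  rw [← hstep, net.hp0]

lemma child_unique {j s i i' : Fin (N + 1)} (hi0 : i ≠ 0) (hi0' : i' ≠ 0)
    (hpi : net.onPath i s) (hpi' : net.onPath i' s)
    (hp : net.p i = j) (hp' : net.p i' = j) : i = i' := by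
  obtain ⟨k, hk⟩ := hpi
  obtain ⟨k', hk'⟩ := hpi'
  have key : ∀ (a b : Fin (N + 1)) (ka kb : ℕ), b ≠ 0 →
      net.p^[ka] s = a → net.p^[kb] s = b →
      net.p a = j → net.p b = j → ka ≤ kb → a = b := by
    intro a b ka kb hb hka hkb hpa hpb hle
    rcases Nat.eq_or_lt_of_le hle with heq | hlt
    · rw [← hka, ← hkb, heq]
    · exfalso
      have h1 : net.p^[ka + 1] s = j := by
        rw [Function.iterate_succ_apply', hka, hpa]
      have h2 : net.p^[kb + 1] s = j := by
        rw [Function.iterate_succ_apply', hkb, hpb]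
      have h3 : net.p^[kb - ka] j = j := by
        rw [← h1, ← Function.iterate_add_apply]
        have : kb - ka + (ka + 1) = kb + 1 := by omega
        rw [this, h2]
        exact h1.symm
      by_cases hj : j = 0
      · apply hb
        rw [← hkb]
        have hco : kb = (kb - (ka + 1)) + (ka + 1) := by omega
        rw [hco, Function.iterate_add_apply, h1, hj, net.iter_zero]
      · exact net.no_period hj (by omega : 0 < kb - ka) h3
  rcases le_total k k' with hle | hle
  · exact key i i' k k' hi0' hk hk' hp hp' hle
  · exact (key i' i k' k hi0 hk' hk hp' hp hle).symm

lemma w_le_f (j : Fin (N + 1)) : net.w j ≤ net.f j := by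
  apply Finset.card_le_card
  intro u hu
  simp only [Finset.mem_filter, Finset.mem_univ, true_and] at hu ⊢
  rw [hu]; exact net.onPath_self j

lemma one_le_f {i : Fin (N + 1)} {u : Fin (U + 1)} (h : net.onPath i (net.σ u)) :
    1 ≤ net.f i :=
  Finset.card_pos.mpr ⟨u, Finset.mem_filter.mpr ⟨Finset.mem_univ _, h⟩⟩

lemma rate_pos (l : Link N U) : 0 < net.rate l := by
  cases l with
  | inl u => exact net.hRa u
  | inr i => exact net.hR1

lemma inv_Ra_le_c (u : Fin (U + 1)) : (net.Ra u)⁻¹ ≤ net.c (net.σ u) := by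
  have h1 : (net.Ra u)⁻¹ ≤
      ∑ u' : Fin (U + 1), if net.σ u' = net.σ u then (net.Ra u')⁻¹ else 0 := by
    have := Finset.single_le_sum
      (f := fun u' : Fin (U + 1) => if net.σ u' = net.σ u then (net.Ra u')⁻¹ else 0)
      (fun u' _ => by
        split
        · exact inv_nonneg.mpr (net.hRa _).le
        · exact le_rfl) (Finset.mem_univ u)
    simpa using this
  have h2 : (0 : ℝ) ≤ ((net.f (net.σ u) : ℝ) - (net.w (net.σ u) : ℝ)) / net.R1 := by
    apply div_nonneg _ net.hR1.le
    have := net.w_le_f (net.σ u)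
    simp only [sub_nonneg, Nat.cast_le]
    exact this
  have h3 : (0 : ℝ) ≤ if net.σ u ≠ 0 then (net.f (net.σ u) : ℝ) / net.R1 else 0 := by
    split
    · exact div_nonneg (Nat.cast_nonneg _) net.hR1.le
    · exact le_rfl
  unfold c
  linarith

lemma inv_R1_le_c {i : Fin (N + 1)} {u : Fin (U + 1)} (hi : i ≠ 0)
    (h : net.onPath i (net.σ u)) : (net.R1)⁻¹ ≤ net.c i := by
  have h1 : (0 : ℝ) ≤ ∑ u' : Fin (U + 1), if net.σ u' = i then (net.Ra u')⁻¹ else 0 := by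
    apply Finset.sum_nonneg
    intro u' _
    split
    · exact inv_nonneg.mpr (net.hRa _).le
    · exact le_rfl
  have h2 : (0 : ℝ) ≤ ((net.f i : ℝ) - (net.w i : ℝ)) / net.R1 := by
    apply div_nonneg _ net.hR1.le
    simp only [sub_nonneg, Nat.cast_le]
    exact net.w_le_f i
  have h3 : (net.R1)⁻¹ ≤ (if i ≠ 0 then (net.f i : ℝ) / net.R1 else 0) := by
    rw [if_pos hi]
    have hf : (1 : ℝ) ≤ (net.f i : ℝ) := by
      exact_mod_cast net.one_le_f h
    rw [div_eq_mul_inv]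
    calc (net.R1)⁻¹ = 1 * (net.R1)⁻¹ := (one_mul _).symm
      _ ≤ (net.f i : ℝ) * (net.R1)⁻¹ := by
          exact mul_le_mul_of_nonneg_right hf (inv_nonneg.mpr net.hR1.le)
  unfold c
  linarith

lemma backhaul_sum (j s : Fin (N + 1)) (r : ℝ) :
    (∑ i : Fin (N + 1),
       if i ≠ 0 ∧ net.onPath i s ∧ (j = i ∨ j = net.p i) then r else 0)
      = (if j ≠ 0 ∧ net.onPath j s then r else 0)
        + (if net.onPath j s ∧ s ≠ j then r else 0) := by
  have hterm : ∀ i : Fin (N + 1),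
      (if i ≠ 0 ∧ net.onPath i s ∧ (j = i ∨ j = net.p i) then r else 0)
        = (if i = j ∧ j ≠ 0 ∧ net.onPath j s then r else 0)
          + (if i ≠ 0 ∧ net.onPath i s ∧ j = net.p i ∧ j ≠ i then r else 0) := by
    intro i
    by_cases hji : j = i
    · subst hji
      by_cases h0 : j = 0 <;> by_cases hOP : net.onPath j s <;> simp [h0, hOP]
    · have hiff : (i ≠ 0 ∧ net.onPath i s ∧ (j = i ∨ j = net.p i)) ↔
          (i ≠ 0 ∧ net.onPath i s ∧ j = net.p i ∧ j ≠ i) := by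
        constructor
        · rintro ⟨a, b, (h | h)⟩
          · exact absurd h hji
          · exact ⟨a, b, h, hji⟩
        · rintro ⟨a, b, h, _⟩; exact ⟨a, b, Or.inr h⟩
      rw [if_congr hiff rfl rfl]
      rw [if_neg (show ¬(i = j ∧ j ≠ 0 ∧ net.onPath j s) from fun h => hji h.1.symm),
        zero_add]
  rw [Finset.sum_congr rfl fun i _ => hterm i, Finset.sum_add_distrib]
  congr 1
  · have h1 : ∀ i : Fin (N + 1),
        (if i = j ∧ j ≠ 0 ∧ net.onPath j s then r else 0)
          = (if i = j then (if j ≠ 0 ∧ net.onPath j s then r else 0) else 0) := by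
      intro i; by_cases h : i = j <;> simp [h]
    rw [Finset.sum_congr rfl fun i _ => h1 i, Finset.sum_ite_eq' Finset.univ j]
    simp
  · by_cases h : net.onPath j s ∧ s ≠ j
    · obtain ⟨i₀, hi₀0, hi₀p, hi₀j, hji₀⟩ := net.exists_child h.1 h.2
      rw [if_pos h]
      rw [Finset.sum_eq_single_of_mem i₀ (Finset.mem_univ _)]
      · rw [if_pos ⟨hi₀0, hi₀p, hi₀j.symm, hji₀⟩]
      · intro b _ hb
        rw [if_neg]
        rintro ⟨hb0, hbp, hbj, _⟩
        exact hb (net.child_unique hb0 hi₀0 hbp hi₀p hbj.symm hi₀j)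
    · rw [if_neg h, Finset.sum_eq_zero]
      intro i _
      rw [if_neg]
      rintro ⟨hi0, hip, hij, hji⟩
      apply h
      constructor
      · rw [hij]; exact net.onPath_parent hip
      · intro hsj
        subst hsj
        obtain ⟨m, hm⟩ := hip
        have hcyc : net.p^[m + 1] s = s := by
          rw [Function.iterate_succ_apply', hm]; exact hij.symm
        by_cases hj0 : s = 0
        · apply hi0; rw [← hm, hj0, net.iter_zero]
        · exact net.no_period hj0 (Nat.succ_pos m) hcyc

lemma S_user (j : Fin (N + 1)) (u : Fin (U + 1)) :
    (∑ l : Link N U, if net.incident l j ∧ net.isHop l u then (net.rate l)⁻¹ else 0)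
      = (if net.σ u = j then (net.Ra u)⁻¹ else 0)
        + ((if j ≠ 0 ∧ net.onPath j (net.σ u) then (net.R1)⁻¹ else 0)
          + (if net.onPath j (net.σ u) ∧ net.σ u ≠ j then (net.R1)⁻¹ else 0)) := by
  rw [Fintype.sum_sum_type]
  congr 1
  · -- access links
    have h1 : ∀ u' : Fin (U + 1),
        (if net.incident (Sum.inl u') j ∧ net.isHop (Sum.inl u') u
            then (net.rate (Sum.inl u'))⁻¹ else 0)
          = (if u' = u then (if net.σ u' = j then (net.Ra u')⁻¹ else 0) else 0) := by
      intro u'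
      by_cases h : u' = u
      · subst h
        simp [incident, isHop, rate]
      · simp [incident, isHop, rate, h]
    rw [Finset.sum_congr rfl fun u' _ => h1 u', Finset.sum_ite_eq' Finset.univ u]
    simp
  · -- backhaul links
    have h2 : ∀ i : Fin (N + 1),
        (if net.incident (Sum.inr i) j ∧ net.isHop (Sum.inr i) u
            then (net.rate (Sum.inr i))⁻¹ else 0)
          = (if i ≠ 0 ∧ net.onPath i (net.σ u) ∧ (j = i ∨ j = net.p i)
              then (net.R1)⁻¹ else 0) := by
      intro i
      apply if_congr _ rfl rfl
      show (i ≠ 0 ∧ (j = i ∨ j = net.p i)) ∧ (i ≠ 0 ∧ net.onPath i (net.σ u)) ↔ _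
      tauto
    rw [Finset.sum_congr rfl fun i _ => h2 i, net.backhaul_sum j (net.σ u)]

lemma sum_ind (r : ℝ) (P : Fin (U + 1) → Prop) [DecidablePred P] :
    (∑ u : Fin (U + 1), if P u then r else 0)
      = ((Finset.univ.filter P).card : ℝ) * r := by
  rw [← Finset.sum_filter, Finset.sum_const, nsmul_eq_mul]

lemma S_sum (j : Fin (N + 1)) :
    (∑ u : Fin (U + 1), ∑ l : Link N U,
        if net.incident l j ∧ net.isHop l u then (net.rate l)⁻¹ else 0)
      = net.c j := by
  rw [Finset.sum_congr rfl fun u _ => net.S_user j u, Finset.sum_add_distrib,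
    Finset.sum_add_distrib]
  have hT3 : (∑ u : Fin (U + 1),
      if j ≠ 0 ∧ net.onPath j (net.σ u) then (net.R1)⁻¹ else 0)
        = (if j ≠ 0 then (net.f j : ℝ) / net.R1 else 0) := by
    by_cases hj : j = 0
    · simp [hj]
    · rw [if_pos hj]
      have : ∀ u : Fin (U + 1),
          (if j ≠ 0 ∧ net.onPath j (net.σ u) then (net.R1)⁻¹ else 0)
            = (if net.onPath j (net.σ u) then (net.R1)⁻¹ else 0) := by
        intro u; by_cases h : net.onPath j (net.σ u) <;> simp [h, hj]
      rw [Finset.sum_congr rfl fun u _ => this u, sum_ind]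
      show ((net.f j : ℝ)) * (net.R1)⁻¹ = (net.f j : ℝ) / net.R1
      rw [div_eq_mul_inv]
  have hT2 : (∑ u : Fin (U + 1),
      if net.onPath j (net.σ u) ∧ net.σ u ≠ j then (net.R1)⁻¹ else 0)
        = ((net.f j : ℝ) - (net.w j : ℝ)) / net.R1 := by
    have hsplit : ∀ u : Fin (U + 1),
        (if net.onPath j (net.σ u) ∧ net.σ u ≠ j then (net.R1)⁻¹ else 0)
          = (if net.onPath j (net.σ u) then (net.R1)⁻¹ else 0)
            - (if net.σ u = j then (net.R1)⁻¹ else 0) := by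
      intro u
      by_cases h1 : net.σ u = j
      · have hop : net.onPath j (net.σ u) := by rw [h1]; exact net.onPath_self j
        simp [h1, net.onPath_self j]
      · simp [h1]
    rw [Finset.sum_congr rfl fun u _ => hsplit u, Finset.sum_sub_distrib,
      sum_ind, sum_ind]
    show ((net.f j : ℝ)) * (net.R1)⁻¹ - ((net.w j : ℝ)) * (net.R1)⁻¹ = _
    rw [div_eq_mul_inv, sub_mul]
  rw [hT3, hT2]
  unfold c
  ring

end HDNet

/-- **Max-min rate, half-duplex IAB (Theorem 1).** Given a nearest-neighbour routing
tree in which every BS has a unique parent, the supremum over feasible scheduling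
matrices of the minimum end-to-end user rate is attained, and equals
`γ* = (max_{i} c_i)⁻¹`. -/
theorem maxmin_halfduplex_IAB (N U : ℕ) (net : HDNet N U) :
    IsGreatest
      {θ : ℝ | ∃ τ : HDNet.Link N U → Fin (U + 1) → ℝ,
          net.Feasible τ ∧ θ = Finset.univ.inf' Finset.univ_nonempty (net.e2e τ)}
      ((Finset.univ.sup' Finset.univ_nonempty net.c)⁻¹) := by
  set C := Finset.univ.sup' Finset.univ_nonempty net.c with hC
  have hle_sup : ∀ i : Fin (N + 1), net.c i ≤ C :=
    fun i => Finset.le_sup' net.c (Finset.mem_univ i)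
  have hCpos : 0 < C := by
    have h1 : (net.Ra 0)⁻¹ ≤ net.c (net.σ 0) := net.inv_Ra_le_c 0
    have h2 : net.c (net.σ 0) ≤ C := hle_sup _
    have h3 : 0 < (net.Ra 0)⁻¹ := inv_pos.mpr (net.hRa 0)
    linarith
  constructor
  · -- membership: the explicit schedule attains C⁻¹
    set τ : HDNet.Link N U → Fin (U + 1) → ℝ :=
      fun l u => if net.isHop l u then C⁻¹ * (net.rate l)⁻¹ else 0 with hτ
    have hval : ∀ (l : HDNet.Link N U) (u : Fin (U + 1)), net.isHop l u →
        net.rate l * τ l u = C⁻¹ := by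
      intro l u h
      rw [hτ]
      dsimp only
      rw [if_pos h, mul_comm C⁻¹, ← mul_assoc,
        mul_inv_cancel₀ (net.rate_pos l).ne', one_mul]
    have he2e : ∀ u : Fin (U + 1), net.e2e τ u = C⁻¹ := by
      intro u
      apply le_antisymm
      · have hm : (Sum.inl u : HDNet.Link N U) ∈
            Finset.univ.filter (fun l => net.isHop l u) :=
          Finset.mem_filter.mpr ⟨Finset.mem_univ _, rfl⟩
        calc net.e2e τ u ≤ net.rate (Sum.inl u) * τ (Sum.inl u) u :=
              Finset.inf'_le _ hm
          _ = C⁻¹ := hval _ u rfl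
      · apply Finset.le_inf'
        intro l hl
        exact (hval l u (Finset.mem_filter.mp hl).2).ge
    refine ⟨τ, ⟨?_, ?_, ?_⟩, ?_⟩
    · intro l u
      constructor
      · rw [hτ]; dsimp only
        split
        · exact mul_nonneg (inv_nonneg.mpr hCpos.le)
            (inv_nonneg.mpr (net.rate_pos l).le)
        · exact le_rfl
      · rw [hτ]; dsimp only
        split
        case isTrue h =>
          have hrate : (net.rate l)⁻¹ ≤ C := by
            cases l with
            | inl u' =>
              have hu : u' = u := h
              calc (net.Ra u')⁻¹ ≤ net.c (net.σ u') := net.inv_Ra_le_c u'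
                _ ≤ C := hle_sup _
            | inr i =>
              obtain ⟨hi0, hip⟩ := h
              calc (net.R1)⁻¹ ≤ net.c i := net.inv_R1_le_c hi0 hip
                _ ≤ C := hle_sup _
          calc C⁻¹ * (net.rate l)⁻¹ ≤ C⁻¹ * C :=
                mul_le_mul_of_nonneg_left hrate (inv_nonneg.mpr hCpos.le)
            _ = 1 := inv_mul_cancel₀ hCpos.ne'
        case isFalse h => exact zero_le_one
    · intro l u h
      rw [hτ]; dsimp only
      rw [if_neg h]
    · intro j
      have hswap : (∑ l : HDNet.Link N U, ∑ u : Fin (U + 1),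
          if net.incident l j then τ l u else 0) = C⁻¹ * net.c j := by
        rw [Finset.sum_comm, ← net.S_sum j, Finset.mul_sum]
        apply Finset.sum_congr rfl
        intro u _
        rw [Finset.mul_sum]
        apply Finset.sum_congr rfl
        intro l _
        rw [hτ]; dsimp only
        by_cases h1 : net.incident l j <;> by_cases h2 : net.isHop l u <;>
          simp [h1, h2]
      rw [hswap]
      calc C⁻¹ * net.c j ≤ C⁻¹ * C :=
            mul_le_mul_of_nonneg_left (hle_sup j) (inv_nonneg.mpr hCpos.le)
        _ = 1 := inv_mul_cancel₀ hCpos.ne'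
    · apply le_antisymm
      · exact Finset.le_inf' _ _ fun u _ => (he2e u).ge
      · calc Finset.univ.inf' Finset.univ_nonempty (net.e2e τ)
            ≤ net.e2e τ 0 := Finset.inf'_le _ (Finset.mem_univ 0)
          _ = C⁻¹ := he2e 0
  · -- upper bound
    rintro θ ⟨τ, ⟨hτ01, hτ0, hbs⟩, hθ⟩
    obtain ⟨j, -, hj⟩ := Finset.exists_mem_eq_sup' (Finset.univ_nonempty) net.c
    have hCj : C = net.c j := hj
    have hcjpos : 0 < net.c j := hCj ▸ hCpos
    have hθτ : ∀ (l : HDNet.Link N U) (u : Fin (U + 1)), net.isHop l u →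
        θ * (net.rate l)⁻¹ ≤ τ l u := by
      intro l u hl
      have h1 : θ ≤ net.e2e τ u := by
        rw [hθ]; exact Finset.inf'_le _ (Finset.mem_univ u)
      have h2 : net.e2e τ u ≤ net.rate l * τ l u :=
        Finset.inf'_le (fun l' => net.rate l' * τ l' u)
          (Finset.mem_filter.mpr ⟨Finset.mem_univ l, hl⟩)
      have hr := net.rate_pos l
      calc θ * (net.rate l)⁻¹ ≤ (net.rate l * τ l u) * (net.rate l)⁻¹ :=
            mul_le_mul_of_nonneg_right (h1.trans h2) (inv_nonneg.mpr hr.le)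
        _ = τ l u := by
            rw [mul_comm (net.rate l), mul_assoc, mul_inv_cancel₀ hr.ne', mul_one]
    have hswap : (∑ l : HDNet.Link N U, ∑ u : Fin (U + 1),
        if net.incident l j ∧ net.isHop l u then θ * (net.rate l)⁻¹ else 0)
          = θ * net.c j := by
      rw [Finset.sum_comm, ← net.S_sum j, Finset.mul_sum]
      apply Finset.sum_congr rfl
      intro u _
      rw [Finset.mul_sum]
      apply Finset.sum_congr rfl
      intro l _
      by_cases h : net.incident l j ∧ net.isHop l u <;> simp [h]
    have hmain : θ * net.c j ≤ 1 := by
      rw [← hswap]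
      refine le_trans ?_ (hbs j)
      apply Finset.sum_le_sum
      intro l _
      apply Finset.sum_le_sum
      intro u _
      by_cases h1 : net.incident l j
      · rw [if_pos h1]
        by_cases h2 : net.isHop l u
        · rw [if_pos ⟨h1, h2⟩]
          exact hθτ l u h2
        · rw [if_neg (fun h => h2 h.2)]
          exact (hτ01 l u).1
      · rw [if_neg h1, if_neg (fun h => h1 h.1)]
    rw [hCj, inv_eq_one_div]
    exact (le_div_iff₀ hcjpos).mpr hmain
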